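/- Let X, Y be compact metric spaces with compact subsets A ⊆ X, B ⊆ Y, and let ε ≥ 0. The infimum over all metric spaces Z and isometric embeddings f : X → Z, g : Y → Z of max( d_H(f(X), g(Y)), d_H(f(A), g(B)) ) is at most ε if and only if there exists a correspondence R between X and Y with dis(R) ≤ 2ε such that every point of A R-corresponds to some point of B and every point of B R-corresponds to some point of A. -/

import Mathlib

open Metric Set

open EMetric Filter Topology


lemma extract_corr {X Y : Type} [MetricSpace X] [CompactSpace X] [MetricSpace Y] [CompactSpace Y]
    (A : Set X) (B : Set Y) (hA : IsCompact A) (hB : IsCompact B)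
    (hAne : A.Nonempty) (hBne : B.Nonempty) (c : ℝ)
    {Z : Type} [MetricSpace Z] {f : X → Z} {g : Y → Z}
    (hf : Isometry f) (hg : Isometry g)
    (h1 : hausdorffDist (range f) (range g) ≤ c)
    (h2 : hausdorffDist (f '' A) (g '' B) ≤ c) :
    ∃ R : Set (X × Y),
      (∀ x : X, ∃ y : Y, (x, y) ∈ R) ∧ (∀ y : Y, ∃ x : X, (x, y) ∈ R) ∧
      (∀ p ∈ R, ∀ q ∈ R, |dist p.1 q.1 - dist p.2 q.2| ≤ 2 * c) ∧
      (∀ a ∈ A, ∃ b ∈ B, (a, b) ∈ R) ∧ (∀ b ∈ B, ∃ a ∈ A, (a, b) ∈ R) := by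
  haveI : Nonempty X := ⟨hAne.some⟩
  haveI : Nonempty Y := ⟨hBne.some⟩
  have cf : Continuous f := hf.continuous
  have cg : Continuous g := hg.continuous
  have krf : IsCompact (range f) := isCompact_range cf
  have krg : IsCompact (range g) := isCompact_range cg
  have kfA : IsCompact (f '' A) := hA.image cf
  have kgB : IsCompact (g '' B) := hB.image cg
  have fin1 : hausdorffEdist (range f) (range g) ≠ ⊤ :=
    hausdorffEdist_ne_top_of_nonempty_of_bounded (range_nonempty f) (range_nonempty g)
      krf.isBounded krg.isBounded
  have fin2 : hausdorffEdist (f '' A) (g '' B) ≠ ⊤ :=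
    hausdorffEdist_ne_top_of_nonempty_of_bounded (hAne.image f) (hBne.image g)
      kfA.isBounded kgB.isBounded
  refine ⟨{p | dist (f p.1) (g p.2) ≤ c}, ?_, ?_, ?_, ?_, ?_⟩
  · intro x
    have : infDist (f x) (range g) ≤ c :=
      (infDist_le_hausdorffDist_of_mem (mem_range_self x) fin1).trans h1
    obtain ⟨z, ⟨y, rfl⟩, hz⟩ := krg.exists_infDist_eq_dist (range_nonempty g) (f x)
    exact ⟨y, by simpa [← hz] using this⟩
  · intro y
    have : infDist (g y) (range f) ≤ c := by
      have := infDist_le_hausdorffDist_of_mem (t := range f) (mem_range_self y)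
        (by rw [hausdorffEDist_comm]; exact fin1)
      rw [hausdorffDist_comm] at this
      exact this.trans h1
    obtain ⟨z, ⟨x, rfl⟩, hz⟩ := krf.exists_infDist_eq_dist (range_nonempty f) (g y)
    exact ⟨x, show dist (f x) (g y) ≤ c by rw [dist_comm, ← hz]; exact this⟩
  · rintro ⟨x, y⟩ hp ⟨x', y'⟩ hq
    simp only [mem_setOf_eq] at hp hq ⊢
    rw [← hf.dist_eq x x', ← hg.dist_eq y y']
    have t1 : dist (f x) (f x') ≤ dist (f x) (g y) + dist (g y) (g y') + dist (g y') (f x') :=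
      dist_triangle4 _ _ _ _
    have t2 : dist (g y) (g y') ≤ dist (g y) (f x) + dist (f x) (f x') + dist (f x') (g y') :=
      dist_triangle4 _ _ _ _
    rw [abs_le]
    constructor
    · have := dist_comm (g y) (f x); have := dist_comm (f x') (g y'); simp at *; linarith
    · have := dist_comm (g y') (f x'); linarith
  · intro a ha
    have : infDist (f a) (g '' B) ≤ c :=
      (infDist_le_hausdorffDist_of_mem (mem_image_of_mem f ha) fin2).trans h2
    obtain ⟨z, ⟨b, hb, rfl⟩, hz⟩ := kgB.exists_infDist_eq_dist (hBne.image g) (f a)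
    exact ⟨b, hb, by simpa [← hz] using this⟩
  · intro b hb
    have : infDist (g b) (f '' A) ≤ c := by
      have := infDist_le_hausdorffDist_of_mem (t := f '' A) (mem_image_of_mem g hb)
        (by rw [hausdorffEDist_comm]; exact fin2)
      rw [hausdorffDist_comm] at this
      exact this.trans h2
    obtain ⟨z, ⟨a, ha, rfl⟩, hz⟩ := kfA.exists_infDist_eq_dist (hAne.image f) (g b)
    exact ⟨a, ha, show dist (f a) (g b) ≤ c by rw [dist_comm, ← hz]; exact this⟩


lemma exists_mem_S {X Y : Type} [MetricSpace X] [CompactSpace X] [MetricSpace Y] [CompactSpace Y]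
    (A : Set X) (B : Set Y) (R : Set (X × Y)) (hRne : R.Nonempty) (c : ℝ) (hc : 0 < c)
    (h1 : ∀ x : X, ∃ y : Y, (x, y) ∈ R) (h2 : ∀ y : Y, ∃ x : X, (x, y) ∈ R)
    (hdis : ∀ p ∈ R, ∀ q ∈ R, |dist p.1 q.1 - dist p.2 q.2| ≤ 2 * c)
    (h4 : ∀ a ∈ A, ∃ b ∈ B, (a, b) ∈ R) (h5 : ∀ b ∈ B, ∃ a ∈ A, (a, b) ∈ R) :
    ∃ r ∈ {r : ℝ | ∃ (Z : Type) (_ : MetricSpace Z) (f : X → Z) (g : Y → Z),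
        Isometry f ∧ Isometry g ∧
        max (hausdorffDist (range f) (range g)) (hausdorffDist (f '' A) (g '' B)) = r}, r ≤ c := by
  haveI : Nonempty R := ⟨⟨hRne.some, hRne.some_mem⟩⟩
  set Φ : R → X := fun p => p.1.1 with hΦ
  set Ψ : R → Y := fun p => p.1.2 with hΨ
  have H : ∀ p q : R, |dist (Φ p) (Φ q) - dist (Ψ p) (Ψ q)| ≤ 2 * c := fun p q =>
    hdis _ p.2 _ q.2
  letI M : MetricSpace (X ⊕ Y) := glueMetricApprox Φ Ψ c hc H
  have Il : Isometry (Sum.inl : X → X ⊕ Y) := Isometry.of_dist_eq fun _ _ => rfl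
  have Ir : Isometry (Sum.inr : Y → X ⊕ Y) := Isometry.of_dist_eq fun _ _ => rfl
  have key : ∀ (x : X) (y : Y), (x, y) ∈ R → dist (Sum.inl x : X ⊕ Y) (Sum.inr y) = c :=
    fun x y h => glueDist_glued_points Φ Ψ c ⟨(x, y), h⟩
  have hd1 : hausdorffDist (range (Sum.inl : X → X ⊕ Y)) (range (Sum.inr : Y → X ⊕ Y)) ≤ c := by
    apply hausdorffDist_le_of_mem_dist hc.le
    · rintro _ ⟨x, rfl⟩
      obtain ⟨y, hy⟩ := h1 x
      exact ⟨Sum.inr y, mem_range_self y, (key x y hy).le⟩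
    · rintro _ ⟨y, rfl⟩
      obtain ⟨x, hx⟩ := h2 y
      exact ⟨Sum.inl x, mem_range_self x, by rw [dist_comm]; exact (key x y hx).le⟩
  have hd2 : hausdorffDist ((Sum.inl : X → X ⊕ Y) '' A) ((Sum.inr : Y → X ⊕ Y) '' B) ≤ c := by
    apply hausdorffDist_le_of_mem_dist hc.le
    · rintro _ ⟨a, ha, rfl⟩
      obtain ⟨b, hb, hab⟩ := h4 a ha
      exact ⟨Sum.inr b, mem_image_of_mem _ hb, (key a b hab).le⟩
    · rintro _ ⟨b, hb, rfl⟩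
      obtain ⟨a, ha, hab⟩ := h5 b hb
      exact ⟨Sum.inl a, mem_image_of_mem _ ha, by rw [dist_comm]; exact (key a b hab).le⟩
  exact ⟨_, ⟨X ⊕ Y, M, Sum.inl, Sum.inr, Il, Ir, rfl⟩, max_le hd1 hd2⟩

/-- Strassen-type characterization for compact metric spaces equipped with a distinguished
compact subset: the infimum over ambient spaces of `max(d_H(f(X), g(Y)), d_H(f(A), g(B)))`
is at most `ε` iff there is a correspondence `R` with distortion at most `2ε` under which
every point of `A` corresponds to a point of `B` and vice versa. -/
theorem stmt_10 (X Y : Type) [MetricSpace X] [CompactSpace X] [MetricSpace Y] [CompactSpace Y]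
    (A : Set X) (B : Set Y) (hA : IsCompact A) (hB : IsCompact B)
    (hAne : A.Nonempty) (hBne : B.Nonempty) (ε : ℝ) (hε : 0 ≤ ε) :
    sInf {r : ℝ | ∃ (Z : Type) (_ : MetricSpace Z) (f : X → Z) (g : Y → Z),
        Isometry f ∧ Isometry g ∧
        max (hausdorffDist (range f) (range g)) (hausdorffDist (f '' A) (g '' B)) = r} ≤ ε ↔
      ∃ R : Set (X × Y),
        (∀ x : X, ∃ y : Y, (x, y) ∈ R) ∧ (∀ y : Y, ∃ x : X, (x, y) ∈ R) ∧
        (∀ p ∈ R, ∀ q ∈ R, |dist p.1 q.1 - dist p.2 q.2| ≤ 2 * ε) ∧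
        (∀ a ∈ A, ∃ b ∈ B, (a, b) ∈ R) ∧ (∀ b ∈ B, ∃ a ∈ A, (a, b) ∈ R) := by
  obtain ⟨a0, ha0⟩ := hAne
  obtain ⟨b0, hb0⟩ := hBne
  haveI : Nonempty X := ⟨a0⟩
  haveI : Nonempty Y := ⟨b0⟩
  constructor
  · intro h
    have hSne : {r : ℝ | ∃ (Z : Type) (_ : MetricSpace Z) (f : X → Z) (g : Y → Z),
        Isometry f ∧ Isometry g ∧
        max (hausdorffDist (range f) (range g)) (hausdorffDist (f '' A) (g '' B)) = r}.Nonempty := by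
      obtain ⟨r, hr, -⟩ := exists_mem_S A B univ ⟨(a0, b0), trivial⟩
        (Metric.diam (univ : Set X) + Metric.diam (univ : Set Y) + 1)
        (by have := Metric.diam_nonneg (s := (univ : Set X)); have := Metric.diam_nonneg (s := (univ : Set Y)); linarith)
        (fun x => ⟨b0, trivial⟩) (fun y => ⟨a0, trivial⟩)
        (by
          intro p _ q _
          have hx := dist_le_diam_of_mem isCompact_univ.isBounded (mem_univ p.1) (mem_univ q.1)
          have hy := dist_le_diam_of_mem isCompact_univ.isBounded (mem_univ p.2) (mem_univ q.2)
          have n1 := dist_nonneg (x := p.1) (y := q.1)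
          have n2 := dist_nonneg (x := p.2) (y := q.2)
          rw [abs_le]; constructor <;> linarith)
        (fun a _ => ⟨b0, hb0, trivial⟩) (fun b _ => ⟨a0, ha0, trivial⟩)
      exact ⟨r, hr⟩
    have key : ∀ n : ℕ, ∃ R : Set (X × Y),
        (∀ x : X, ∃ y : Y, (x, y) ∈ R) ∧ (∀ y : Y, ∃ x : X, (x, y) ∈ R) ∧
        (∀ p ∈ R, ∀ q ∈ R, |dist p.1 q.1 - dist p.2 q.2| ≤ 2 * (ε + 1 / (n + 1 : ℝ))) ∧
        (∀ a ∈ A, ∃ b ∈ B, (a, b) ∈ R) ∧ (∀ b ∈ B, ∃ a ∈ A, (a, b) ∈ R) := by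
      intro n
      have hpos : (0 : ℝ) < 1 / (n + 1 : ℝ) := by positivity
      obtain ⟨r, hrS, hrlt⟩ := exists_lt_of_csInf_lt hSne (lt_of_le_of_lt h (lt_add_of_pos_right ε hpos))
      obtain ⟨Z, mZ, f, g, hf, hg, hmax⟩ := hrS
      exact extract_corr A B hA hB ⟨a0, ha0⟩ ⟨b0, hb0⟩ _ hf hg
        (((le_max_left _ _).trans hmax.le).trans hrlt.le)
        (((le_max_right _ _).trans hmax.le).trans hrlt.le)
    choose Rn hRn1 hRn2 hRn3 hRn4 hRn5 using key
    let U : Ultrafilter ℕ := Ultrafilter.of Filter.atTop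
    have hU : ↑U ≤ (Filter.atTop : Filter ℕ) := Ultrafilter.of_le _
    have hlim : ∀ u : ℕ → X × Y, ∃ p : X × Y, Filter.Tendsto u (↑U) (𝓝 p) := by
      intro u
      obtain ⟨p, -, hp⟩ := isCompact_univ.ultrafilter_le_nhds (U.map u) (by simp)
      exact ⟨p, by rwa [Ultrafilter.coe_map] at hp⟩
    refine ⟨{p : X × Y | ∃ u : ℕ → X × Y, (∀ n, u n ∈ Rn n) ∧ Filter.Tendsto u (↑U) (𝓝 p)},
      ?_, ?_, ?_, ?_, ?_⟩
    · intro x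
      choose yn hyn using fun n => hRn1 n x
      obtain ⟨p, hp⟩ := hlim fun n => (x, yn n)
      have hfst : Filter.Tendsto (fun _ : ℕ => x) (↑U) (𝓝 p.1) := (continuous_fst.tendsto p).comp hp
      have hx : p.1 = x := tendsto_nhds_unique hfst tendsto_const_nhds
      refine ⟨p.2, fun n => (x, yn n), hyn, ?_⟩
      have hpe : (x, p.2) = p := by rw [← hx]
      rw [hpe]; exact hp
    · intro y
      choose xn hxn using fun n => hRn2 n y
      obtain ⟨p, hp⟩ := hlim fun n => (xn n, y)
      have hsnd : Filter.Tendsto (fun _ : ℕ => y) (↑U) (𝓝 p.2) := (continuous_snd.tendsto p).comp hp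
      have hy : p.2 = y := tendsto_nhds_unique hsnd tendsto_const_nhds
      refine ⟨p.1, fun n => (xn n, y), hxn, ?_⟩
      have hpe : (p.1, y) = p := by rw [← hy]
      rw [hpe]; exact hp
    · rintro p ⟨u, hu, hup⟩ q ⟨v, hv, hvq⟩
      have d1 : Filter.Tendsto (fun n => dist (u n).1 (v n).1) (↑U) (𝓝 (dist p.1 q.1)) :=
        ((continuous_fst.tendsto p).comp hup).dist ((continuous_fst.tendsto q).comp hvq)
      have d2 : Filter.Tendsto (fun n => dist (u n).2 (v n).2) (↑U) (𝓝 (dist p.2 q.2)) :=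
        ((continuous_snd.tendsto p).comp hup).dist ((continuous_snd.tendsto q).comp hvq)
      have dabs := (d1.sub d2).abs
      have dc : Filter.Tendsto (fun n : ℕ => 2 * (ε + 1 / (n + 1 : ℝ))) (↑U) (𝓝 (2 * ε)) := by
        have h0 : Filter.Tendsto (fun n : ℕ => 2 * (ε + 1 / (n + 1 : ℝ))) Filter.atTop
            (𝓝 (2 * (ε + 0))) :=
          (tendsto_const_nhds.add tendsto_one_div_add_atTop_nhds_zero_nat).const_mul 2
        simpa using h0.mono_left hU
      exact le_of_tendsto_of_tendsto' dabs dc fun n => hRn3 n _ (hu n) _ (hv n)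
    · intro a ha
      choose bn hbnB hbn using fun n => hRn4 n a ha
      obtain ⟨p, hp⟩ := hlim fun n => (a, bn n)
      have hfst : Filter.Tendsto (fun _ : ℕ => a) (↑U) (𝓝 p.1) := (continuous_fst.tendsto p).comp hp
      have hx : p.1 = a := tendsto_nhds_unique hfst tendsto_const_nhds
      have hsnd : Filter.Tendsto (fun n => bn n) (↑U) (𝓝 p.2) := (continuous_snd.tendsto p).comp hp
      have hpB : p.2 ∈ B := hB.isClosed.mem_of_tendsto hsnd (Filter.Eventually.of_forall hbnB)
      refine ⟨p.2, hpB, fun n => (a, bn n), hbn, ?_⟩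
      have hpe : (a, p.2) = p := by rw [← hx]
      rw [hpe]; exact hp
    · intro b hb
      choose an hanA han using fun n => hRn5 n b hb
      obtain ⟨p, hp⟩ := hlim fun n => (an n, b)
      have hsnd : Filter.Tendsto (fun _ : ℕ => b) (↑U) (𝓝 p.2) := (continuous_snd.tendsto p).comp hp
      have hy : p.2 = b := tendsto_nhds_unique hsnd tendsto_const_nhds
      have hfst : Filter.Tendsto (fun n => an n) (↑U) (𝓝 p.1) := (continuous_fst.tendsto p).comp hp
      have hpA : p.1 ∈ A := hA.isClosed.mem_of_tendsto hfst (Filter.Eventually.of_forall hanA)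
      refine ⟨p.1, hpA, fun n => (an n, b), han, ?_⟩
      have hpe : (p.1, b) = p := by rw [← hy]
      rw [hpe]; exact hp
  · rintro ⟨R, h1, h2, h3, h4, h5⟩
    have hbdd : BddBelow {r : ℝ | ∃ (Z : Type) (_ : MetricSpace Z) (f : X → Z) (g : Y → Z),
        Isometry f ∧ Isometry g ∧
        max (hausdorffDist (range f) (range g)) (hausdorffDist (f '' A) (g '' B)) = r} := by
      refine ⟨0, ?_⟩
      rintro r ⟨Z, mZ, f, g, hf, hg, hmax⟩
      exact hmax ▸ le_trans hausdorffDist_nonneg (le_max_left _ _)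
    refine le_of_forall_pos_le_add fun δ hδ => ?_
    obtain ⟨y0, hy0⟩ := h1 a0
    obtain ⟨r, hrS, hrle⟩ := exists_mem_S A B R ⟨(a0, y0), hy0⟩ (ε + δ) (by linarith) h1 h2
      (fun p hp q hq => (h3 p hp q hq).trans (by linarith)) h4 h5
    exact (csInf_le hbdd hrS).trans hrle
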